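/- Let (X, μ) be a probability space and let E_1, E_2, E_3, … be a sequence of measurable events such that inf_i μ(E_i) > 0. Then there exists a set S = {i_1 < i_2 < …} of indices of positive upper density such that μ(E_{i_1} ∩ … ∩ E_{i_k}) > 0 for every k, i.e., every finite intersection of the events indexed by S has positive measure. -/

import Mathlib

open MeasureTheory Filter

open Function Set in
/-- Strong Bergelson: there is a set whose finite intersections have positive measure and
whose counting function has `limsup` density at least `r / μ univ` (in `ℝ≥0∞`). -/
lemma strong_bergelson_aux {α : Type*} [MeasurableSpace α] {μ : Measure α} [IsFiniteMeasure μ]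
    {r : ENNReal} {s : ℕ → Set α} (hs : ∀ n, MeasurableSet (s n)) (hr₀ : r ≠ 0)
    (hr : ∀ n, r ≤ μ (s n)) :
    ∃ t : Set ℕ,
      (r / μ Set.univ ≤ limsup (fun n : ℕ =>
        (((t ∩ Set.Iic n).ncard : ENNReal)) / (n + 1)) atTop) ∧
      ∀ ⦃u⦄, u ⊆ t → u.Finite → 0 < μ (⋂ n ∈ u, s n) := by
  classical
  let M (f : α → ℝ) : Set α := {x | eLpNormEssSup f μ < ‖f x‖₊}
  let N : Set α := ⋃ u : Finset ℕ, M (Set.indicator (⋂ n ∈ u, s n) 1)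
  have hN₀ : μ N = 0 := measure_iUnion_null fun u ↦ meas_eLpNormEssSup_lt
  have hN₁ (u : Finset ℕ) : ((⋂ n ∈ u, s n) \ N).Nonempty → 0 < μ (⋂ n ∈ u, s n) := by
    simp_rw [pos_iff_ne_zero]
    rintro ⟨x, hx⟩ hu
    refine hx.2 (mem_iUnion.2 ⟨u, ?_⟩)
    rw [mem_setOf, indicator_of_mem hx.1, eLpNormEssSup_eq_zero_iff.2]
    · simp
    · rwa [indicator_ae_eq_zero, Function.support_one, inter_univ]
  let f (n : ℕ) : α → ENNReal :=
    (↑(n + 1) : ENNReal)⁻¹ • ∑ k ∈ Finset.range (n + 1), (s k).indicator 1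
  have hfapp : ∀ n a, f n a
      = (↑(n + 1))⁻¹ * ∑ k ∈ Finset.range (n + 1), (s k).indicator 1 a := by
    simp only [f, Pi.natCast_def, Pi.smul_apply, Pi.inv_apply, Finset.sum_apply, eq_self_iff_true,
    forall_const, imp_true_iff, smul_eq_mul]
  have hf n : Measurable (f n) := by fun_prop (disch := exact hs _)
  have hf₁ n : f n ≤ 1 := by
    rintro a
    rw [hfapp, ← ENNReal.div_eq_inv_mul]
    refine (ENNReal.div_le_iff_le_mul (Or.inl <| Nat.cast_ne_zero.2 n.succ_ne_zero) <|
      Or.inr one_ne_zero).2 ?_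
    rw [mul_comm, ← nsmul_eq_mul, ← Finset.card_range n.succ]
    exact Finset.sum_le_card_nsmul _ _ _ fun _ _ ↦ indicator_le (fun _ _ ↦ le_rfl) _
  have hrf n : r ≤ ∫⁻ a, f n a ∂μ := by
    simp_rw [hfapp]
    rw [lintegral_const_mul _ (Finset.measurable_sum _ fun _ _ ↦ measurable_one.indicator <| hs _),
      lintegral_finset_sum _ fun _ _ ↦ measurable_one.indicator (hs _)]
    simp only [lintegral_indicator_one (hs _)]
    rw [← ENNReal.div_eq_inv_mul, ENNReal.le_div_iff_mul_le (by simp) (by simp), ← nsmul_eq_mul']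
    simpa using Finset.card_nsmul_le_sum (Finset.range (n + 1)) _ _ fun _ _ ↦ hr _
  have hμ : μ ≠ 0 := by rintro rfl; exact hr₀ <| le_bot_iff.1 <| hr 0
  have : ∫⁻ x, limsup (f · x) atTop ∂μ ≤ μ univ := by
    rw [← lintegral_one]
    exact lintegral_mono fun a ↦ limsup_le_of_le ⟨0, fun R _ ↦ bot_le⟩ <|
      Eventually.of_forall fun n ↦ hf₁ _ _
  obtain ⟨x, hxN, hx⟩ := exists_notMem_null_laverage_le hμ
    (ne_top_of_le_ne_top (measure_ne_top μ univ) this) hN₀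
  replace hx : r / μ univ ≤ limsup (f · x) atTop :=
    calc
      _ ≤ limsup (⨍⁻ x, f · x ∂μ) atTop := le_limsup_of_le ⟨1, eventually_map.2 ?_⟩ fun b hb ↦ ?_
      _ ≤ ⨍⁻ x, limsup (f · x) atTop ∂μ := limsup_lintegral_le 1 hf (ae_of_all _ <| hf₁ ·) (by simp)
      _ ≤ limsup (f · x) atTop := hx
  · refine ⟨{n | x ∈ s n}, ?_, fun u hux hu ↦ ?_⟩
    · refine hx.trans (le_of_eq ?_)
      refine limsup_congr (Eventually.of_forall fun n ↦ ?_)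
      rw [hfapp, ← ENNReal.div_eq_inv_mul]
      congr 1
      · have h1 : ({n | x ∈ s n} ∩ Set.Iic n)
            = ↑((Finset.range (n + 1)).filter (fun k ↦ x ∈ s k)) := by
          ext m
          simp only [Set.mem_inter_iff, Set.mem_setOf_eq, Set.mem_Iic, Finset.coe_filter,
            Finset.mem_range, Nat.lt_succ_iff]
          tauto
        rw [h1, Set.ncard_coe_finset, ← Finset.sum_boole]
        refine (Finset.sum_congr rfl fun k _ ↦ ?_).symm
        simp [Set.indicator_apply]
      · push_cast; ring
    · simp_rw [← hu.mem_toFinset]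
      exact hN₁ _ ⟨x, mem_iInter₂.2 fun n hn ↦ hux <| hu.mem_toFinset.1 hn, hxN⟩
  · refine Eventually.of_forall fun n ↦ ?_
    obtain rfl | _ := eq_zero_or_neZero μ
    · simp
    · rw [← laverage_const μ 1]
      exact lintegral_mono (hf₁ _)
  · obtain ⟨n, hn⟩ := hb.exists
    rw [laverage_eq] at hn
    exact (ENNReal.div_le_div_right (hrf _) _).trans hn

/-- Bergelson's intersectivity lemma: if `E 0, E 1, E 2, …` are events in a probability
space with `inf_i μ(E i) > 0`, then there is a strictly increasing sequence of indices,
whose range has positive upper density, all of whose finite (initial) intersections have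
positive measure. -/
theorem bergelson_intersectivity {X : Type*} [MeasurableSpace X] (μ : Measure X)
    [IsProbabilityMeasure μ] (E : ℕ → Set X) (hE : ∀ n, MeasurableSet (E n))
    (hinf : 0 < ⨅ n, μ (E n)) :
    ∃ i : ℕ → ℕ, StrictMono i ∧
      0 < Filter.limsup
        (fun n : ℕ => (Nat.card ↥(Set.range i ∩ Set.Icc 1 n) : ℝ) / n) Filter.atTop ∧
      ∀ k : ℕ, 0 < μ (⋂ r ∈ Finset.range k, E (i r)) := by
  classical
  set r : ENNReal := ⨅ n, μ (E n) with hr_def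
  have hr₀ : r ≠ 0 := hinf.ne'
  have hr : ∀ n, r ≤ μ (E n) := fun n ↦ iInf_le _ n
  obtain ⟨t, hlim, hint⟩ := strong_bergelson_aux hE hr₀ hr
  rw [measure_univ, div_one] at hlim
  -- the counting function
  set cnt : ℕ → ℕ := fun n ↦ (t ∩ Set.Iic n).ncard with hcnt_def
  have hr_top : r ≠ ⊤ := ((hr 0).trans_lt (measure_lt_top μ _)).ne
  have hq : r / 2 < r := ENNReal.half_lt_self hr₀ hr_top
  have hfreq : ∃ᶠ n in atTop, r / 2 < (cnt n : ENNReal) / (n + 1) :=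
    frequently_lt_of_lt_limsup (by isBoundedDefault) (hq.trans_le hlim)
  set ε : ℝ := (r / 2).toReal with hε_def
  have hq0 : r / 2 ≠ 0 := by simp [ENNReal.div_eq_zero_iff, hr₀]
  have hqtop : r / 2 ≠ ⊤ := by simp [ENNReal.div_eq_top, hr_top]
  have hε : 0 < ε := ENNReal.toReal_pos hq0 hqtop
  have hcnt_real : ∀ n, r / 2 < (cnt n : ENNReal) / (n + 1) → ε * (n + 1) ≤ (cnt n : ℝ) := by
    intro n hn
    rw [ENNReal.lt_div_iff_mul_lt (by simp) (by simp)] at hn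
    have := ENNReal.toReal_le_toReal (a := r / 2 * (n + 1)) (by finiteness) (by simp)
      |>.mpr hn.le
    rw [hε_def]
    have h' : ((n : ENNReal) + 1).toReal = (n : ℝ) + 1 := by
      rw [← Nat.cast_add_one, ENNReal.toReal_natCast, Nat.cast_add_one]
    simpa [h'] using this
  -- t is infinite
  have ht_inf : t.Infinite := by
    by_contra h
    rw [Set.not_infinite] at h
    have hfin := h
    have hbd : ∀ n, (cnt n : ℝ) ≤ t.ncard := by
      intro n
      exact_mod_cast Set.ncard_le_ncard Set.inter_subset_left hfin
    obtain ⟨n, hn, hn'⟩ := ((hfreq.and_eventually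
      (eventually_ge_atTop ⌈(t.ncard : ℝ) / ε⌉₊)).exists)
    have h1 : ε * (n + 1) ≤ (cnt n : ℝ) := hcnt_real n hn
    have h2 : (t.ncard : ℝ) / ε ≤ n := by
      calc (t.ncard : ℝ) / ε ≤ ⌈(t.ncard : ℝ) / ε⌉₊ := Nat.le_ceil _
        _ ≤ n := by exact_mod_cast hn'
    have h3 : (t.ncard : ℝ) ≤ ε * n := by
      rwa [div_le_iff₀ hε, mul_comm] at h2
    nlinarith [hbd n]
  refine ⟨Nat.nth (· ∈ t), Nat.nth_strictMono ht_inf, ?_, ?_⟩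
  · -- density
    have hrange : Set.range (Nat.nth (· ∈ t)) = t := Nat.range_nth_of_infinite ht_inf
    rw [hrange]
    -- identify Nat.card with a finset card
    have hfinIcc : ∀ n : ℕ, (t ∩ Set.Icc 1 n).Finite :=
      fun n ↦ (Set.finite_Icc 1 n).subset Set.inter_subset_right
    have hcard : ∀ n : ℕ, (Nat.card ↥(t ∩ Set.Icc 1 n) : ℝ) = (t ∩ Set.Icc 1 n).ncard := by
      intro n
      rw [Nat.card_coe_set_eq]
    have hcnt_le : ∀ n : ℕ, (cnt n : ℝ) ≤ (t ∩ Set.Icc 1 n).ncard + 1 := by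
      intro n
      have hsub : t ∩ Set.Iic n ⊆ insert 0 (t ∩ Set.Icc 1 n) := by
        intro m hm
        rcases Nat.eq_zero_or_pos m with rfl | hm0
        · simp
        · exact Or.inr ⟨hm.1, hm0, hm.2⟩
      calc (cnt n : ℝ) ≤ ((insert 0 (t ∩ Set.Icc 1 n)).ncard : ℝ) := by
            exact_mod_cast Set.ncard_le_ncard hsub ((hfinIcc n).insert 0)
        _ ≤ (t ∩ Set.Icc 1 n).ncard + 1 := by exact_mod_cast Set.ncard_insert_le _ _
    have hfreq2 : ∃ᶠ n in atTop,
        ε / 2 ≤ (Nat.card ↥(t ∩ Set.Icc 1 n) : ℝ) / n := by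
      refine ((hfreq.and_eventually (eventually_ge_atTop (⌈2 / ε⌉₊ + 1))).mono ?_)
      rintro n ⟨hn, hn'⟩
      have hn0 : (0 : ℝ) < n := by
        have : 1 ≤ n := le_trans (Nat.le_add_left 1 _) hn'
        exact_mod_cast this
      have h2 : 2 / ε ≤ n := by
        calc (2 : ℝ) / ε ≤ ⌈2 / ε⌉₊ := Nat.le_ceil _
          _ ≤ n := by exact_mod_cast le_trans (Nat.le_add_right _ 1) hn'
      have h2' : 2 ≤ ε * n := by rwa [div_le_iff₀ hε, mul_comm] at h2
      have h1 : ε * (n + 1) ≤ (cnt n : ℝ) := hcnt_real n hn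
      rw [hcard, le_div_iff₀ hn0]
      have := hcnt_le n
      nlinarith
    refine lt_of_lt_of_le (by positivity : (0:ℝ) < ε / 2)
      (le_limsup_of_frequently_le hfreq2 ?_)
    refine ⟨1, eventually_map.2 (Eventually.of_forall fun n ↦ ?_)⟩
    rcases Nat.eq_zero_or_pos n with rfl | hn0
    · simp
    · rw [hcard, div_le_one (by exact_mod_cast hn0)]
      calc ((t ∩ Set.Icc 1 n).ncard : ℝ)
          ≤ ((Set.Icc 1 n).ncard : ℝ) := by
            exact_mod_cast Set.ncard_le_ncard Set.inter_subset_right (Set.finite_Icc 1 n)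
        _ = n := by
            rw [← Finset.coe_Icc, Set.ncard_coe_finset, Nat.card_Icc]
            push_cast [Nat.add_sub_cancel]
            ring
  · -- intersections
    intro k
    have hsub : (Nat.nth (· ∈ t)) '' ↑(Finset.range k) ⊆ t := by
      rintro m ⟨a, -, rfl⟩
      exact Nat.nth_mem_of_infinite ht_inf a
    have := hint hsub ((Finset.range k).finite_toSet.image _)
    refine this.trans_le (le_of_eq (congrArg μ ?_))
    rw [Set.biInter_image]
    simp
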